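/- If K is a quasi-fibration of H of center v and radius r via γ, and r is strictly greater than the eccentricity of v (i.e., every vertex and arc of K lies on a dipath of length at most r to v, so B⁻_K(v,r) = K), then K is a fibration of H via an extension of γ. In particular, if r exceeds the diameter of K, then K is a fibration of H. -/

import Mathlib

/-- A digraph with possibly multiple arcs and self-loops. -/
structure MDigraph where
  V : Type
  A : Type
  src : A → V
  tgt : A → V

/-- A homomorphism of digraphs: maps vertices to vertices and arcs to arcs,
preserving sources and targets. -/
structure DHom (D₁ D₂ : MDigraph) where
  onV : D₁.V → D₂.V
  onA : D₁.A → D₂.A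
  map_src : ∀ a, onV (D₁.src a) = D₂.src (onA a)
  map_tgt : ∀ a, onV (D₁.tgt a) = D₂.tgt (onA a)

/-- Composition of digraph homomorphisms. -/
def DHom.comp {D₁ D₂ D₃ : MDigraph} (g : DHom D₂ D₃) (f : DHom D₁ D₂) : DHom D₁ D₃ where
  onV := g.onV ∘ f.onV
  onA := g.onA ∘ f.onA
  map_src := by intro a; simp [Function.comp, f.map_src, g.map_src]
  map_tgt := by intro a; simp [Function.comp, f.map_tgt, g.map_tgt]

/-- `φ : D₁ → D₂` is a fibration if every arc of `D₂` lifts uniquely at every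
preimage of its target. -/
def IsFibration {D₁ D₂ : MDigraph} (φ : DHom D₁ D₂) : Prop :=
  ∀ (a : D₂.A) (v : D₁.V), φ.onV v = D₂.tgt a →
    ∃! a' : D₁.A, φ.onA a' = a ∧ D₁.tgt a' = v

/-- `ReachLE D k w v` : there is a dipath of length at most `k` from `w` to `v`. -/
def ReachLE (D : MDigraph) : ℕ → D.V → D.V → Prop
  | 0, w, v => w = v
  | n+1, w, v => w = v ∨ ∃ a : D.A, D.src a = w ∧ ReachLE D n (D.tgt a) v

theorem ReachLE.mono {D : MDigraph} : ∀ {k r : ℕ}, k ≤ r → ∀ {w v : D.V},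
    ReachLE D k w v → ReachLE D r w v := by
  intro k
  induction k with
  | zero =>
    intro r _ w v h
    cases r with
    | zero => exact h
    | succ n => exact Or.inl h
  | succ n ih =>
    intro r hle w v h
    cases r with
    | zero => omega
    | succ m =>
      rcases h with h | ⟨a, ha, hr⟩
      · exact Or.inl h
      · exact Or.inr ⟨a, ha, ih (by omega) hr⟩

/-- Vertices of the in-ball of center `v` and radius `r`. -/
def inBallV (D : MDigraph) (v : D.V) (r : ℕ) : Set D.V := {w | ReachLE D r w v}

/-- Arcs of the in-ball of center `v` and radius `r`: arcs lying on a dipath of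
length at most `r` ending at `v`. -/
def inBallA (D : MDigraph) (v : D.V) (r : ℕ) : Set D.A :=
  {a | ∃ k, k + 1 ≤ r ∧ ReachLE D k (D.tgt a) v}

/-- The in-ball `B⁻_D(v,r)` as a digraph. -/
def inBall (D : MDigraph) (v : D.V) (r : ℕ) : MDigraph where
  V := {w // w ∈ inBallV D v r}
  A := {a // a ∈ inBallA D v r}
  src a := ⟨D.src a.val, by
    obtain ⟨k, hk, hr⟩ := a.property
    exact ReachLE.mono hk (Or.inr ⟨a.val, rfl, hr⟩)⟩
  tgt a := ⟨D.tgt a.val, by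
    obtain ⟨k, hk, hr⟩ := a.property
    exact ReachLE.mono (by omega) hr⟩

theorem center_mem (D : MDigraph) (v : D.V) (r : ℕ) : v ∈ inBallV D v r :=
  ReachLE.mono (Nat.zero_le r) (show ReachLE D 0 v v from rfl)

/-- The inclusion homomorphism of the in-ball into the digraph. -/
def ballIncl (D : MDigraph) (v : D.V) (r : ℕ) : DHom (inBall D v r) D where
  onV := Subtype.val
  onA := Subtype.val
  map_src := fun _ => rfl
  map_tgt := fun _ => rfl

/-- `K` is a quasi-fibration of `H` of center `v` and radius `r` via
`γ : B⁻_K(v,r) → H`: there are a digraph `G`, a fibration `φ : G → H`, a vertex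
`w` of `G` and an isomorphism `δ : B⁻_K(v,r) → B⁻_G(w,r)` sending `v` to `w`
with `γ = φ ∘ δ`. -/
def IsQuasiFibration (K H : MDigraph) (v : K.V) (r : ℕ)
    (γ : DHom (inBall K v r) H) : Prop :=
  ∃ (G : MDigraph) (φ : DHom G H) (w : G.V) (δ : DHom (inBall K v r) (inBall G w r)),
    IsFibration φ ∧ Function.Bijective δ.onV ∧ Function.Bijective δ.onA ∧
    δ.onV ⟨v, center_mem K v r⟩ = ⟨w, center_mem G w r⟩ ∧
    γ = (φ.comp (ballIncl G w r)).comp δ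

theorem ReachLE.map {D₁ D₂ : MDigraph} (f : DHom D₁ D₂) :
    ∀ {k : ℕ} {w v : D₁.V}, ReachLE D₁ k w v → ReachLE D₂ k (f.onV w) (f.onV v) := by
  intro k
  induction k with
  | zero => intro w v h; exact congrArg f.onV h
  | succ n ih =>
    intro w v h
    rcases h with h | ⟨a, ha, hr⟩
    · exact Or.inl (congrArg f.onV h)
    · exact Or.inr ⟨f.onA a, by rw [← f.map_src, ha], by rw [← f.map_tgt]; exact ih hr⟩

theorem reach_inBall (D : MDigraph) (v : D.V) (r : ℕ) :
    ∀ {k : ℕ}, k ≤ r → ∀ {u : D.V} (hu : u ∈ inBallV D v r),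
      ReachLE D k u v →
      ReachLE (inBall D v r) k ⟨u, hu⟩ ⟨v, center_mem D v r⟩ := by
  intro k
  induction k with
  | zero => intro _ u hu h; exact Subtype.ext h
  | succ n ih =>
    intro hkr u hu h
    rcases h with h | ⟨a, ha, hr⟩
    · exact Or.inl (Subtype.ext h)
    · have haA : a ∈ inBallA D v r := ⟨n, hkr, hr⟩
      exact Or.inr ⟨⟨a, haA⟩, Subtype.ext ha, ih (by omega) _ hr⟩

/-- a quasi-fibration of radius strictly greater than the eccentricity
of its center (so that `B⁻_K(v,r) = K`) extends to a fibration. In particular this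
holds when `r` exceeds the diameter of `K`. -/
theorem quasiFibration_large_radius_isFibration (K H : MDigraph) (v : K.V) (r : ℕ)
    (γ : DHom (inBall K v r) H) (hq : IsQuasiFibration K H v r γ)
    (hecc : ∃ e, e < r ∧ ∀ w : K.V, ReachLE K e w v) :
    ∃ φ : DHom K H, IsFibration φ ∧
      (∀ x : (inBall K v r).V, φ.onV x.val = γ.onV x) ∧
      (∀ a : (inBall K v r).A, φ.onA a.val = γ.onA a) := by
  obtain ⟨G, φG, w, δ, hfib, hδV, hδA, hδv, hγ⟩ := hq
  obtain ⟨e, her, hreach⟩ := hecc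
  have hV : ∀ u : K.V, u ∈ inBallV K v r := fun u => ReachLE.mono (le_of_lt her) (hreach u)
  have hA : ∀ a : K.A, a ∈ inBallA K v r := fun a => ⟨e, by omega, hreach _⟩
  -- the composed map γ written out
  have hγV : ∀ x : (inBall K v r).V, γ.onV x = φG.onV (δ.onV x).val := by
    intro x; rw [hγ]; rfl
  have hγA : ∀ x : (inBall K v r).A, γ.onA x = φG.onA (δ.onA x).val := by
    intro x; rw [hγ]; rfl
  -- every vertex of G reached via δ is within distance e < r of w
  have hnear : ∀ u : K.V, ReachLE G e (δ.onV ⟨u, hV u⟩).val w := by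
    intro u
    have h1 : ReachLE (inBall K v r) e ⟨u, hV u⟩ ⟨v, center_mem K v r⟩ :=
      reach_inBall K v r (le_of_lt her) _ (hreach u)
    have h2 := ReachLE.map δ h1
    rw [hδv] at h2
    have h3 := ReachLE.map (ballIncl G w r) h2
    exact h3
  refine ⟨{ onV := fun u => γ.onV ⟨u, hV u⟩,
            onA := fun a => γ.onA ⟨a, hA a⟩,
            map_src := ?_, map_tgt := ?_ }, ?_, ?_, ?_⟩
  · intro a
    show γ.onV ⟨K.src a, hV _⟩ = H.src (γ.onA ⟨a, hA a⟩)
    have : (⟨K.src a, hV _⟩ : (inBall K v r).V) = (inBall K v r).src ⟨a, hA a⟩ :=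
      Subtype.ext rfl
    rw [this]; exact γ.map_src _
  · intro a
    show γ.onV ⟨K.tgt a, hV _⟩ = H.tgt (γ.onA ⟨a, hA a⟩)
    have : (⟨K.tgt a, hV _⟩ : (inBall K v r).V) = (inBall K v r).tgt ⟨a, hA a⟩ :=
      Subtype.ext rfl
    rw [this]; exact γ.map_tgt _
  · -- fibration property
    intro a u hu
    simp only at hu
    have hu : φG.onV (δ.onV ⟨u, hV u⟩).val = H.tgt a := (hγV _).symm.trans hu
    obtain ⟨a', ⟨ha'1, ha'2⟩, ha'u⟩ := hfib a (δ.onV ⟨u, hV u⟩).val hu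
    have ha'mem : a' ∈ inBallA G w r := ⟨e, by omega, ha'2 ▸ hnear u⟩
    obtain ⟨b, hb⟩ := hδA.2 (⟨a', ha'mem⟩ : (inBall G w r).A)
    refine ⟨b.val, ⟨?_, ?_⟩, ?_⟩
    · show γ.onA ⟨b.val, hA _⟩ = a
      have hbeq : (⟨b.val, hA _⟩ : (inBall K v r).A) = b := Subtype.ext rfl
      rw [hbeq, hγA, hb]; exact ha'1
    · -- K.tgt b.val = u
      have h1 : δ.onV ((inBall K v r).tgt b) = (inBall G w r).tgt (δ.onA b) := δ.map_tgt b
      rw [hb] at h1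
      have h2 : ((inBall G w r).tgt ⟨a', ha'mem⟩ : (inBall G w r).V)
          = δ.onV ⟨u, hV u⟩ := Subtype.ext ha'2
      rw [h2] at h1
      have h3 := hδV.1 h1
      exact congrArg Subtype.val h3
    · intro c ⟨hc1, hc2⟩
      simp only at hc1 hc2
      have hcmem := hA c
      have hγc : γ.onA ⟨c, hcmem⟩ = a := hc1
      replace hγc : φG.onA (δ.onA ⟨c, hcmem⟩).val = a := (hγA ⟨c, hcmem⟩).symm.trans hγc
      have htgt : G.tgt (δ.onA ⟨c, hcmem⟩).val = (δ.onV ⟨u, hV u⟩).val := by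
        have h1 : δ.onV ((inBall K v r).tgt ⟨c, hcmem⟩) = (inBall G w r).tgt (δ.onA ⟨c, hcmem⟩) :=
          δ.map_tgt _
        have h2 : ((inBall K v r).tgt ⟨c, hcmem⟩ : (inBall K v r).V) = ⟨u, hV u⟩ :=
          Subtype.ext hc2
        rw [h2] at h1
        exact (congrArg Subtype.val h1).symm
      have := ha'u (δ.onA ⟨c, hcmem⟩).val ⟨hγc, htgt⟩
      have h4 : δ.onA ⟨c, hcmem⟩ = δ.onA b := by
        rw [hb]; exact Subtype.ext this
      have h5 := hδA.1 h4
      exact congrArg Subtype.val h5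
  · intro x
    show γ.onV ⟨x.val, hV _⟩ = γ.onV x
    congr 1
  · intro a
    show γ.onA ⟨a.val, hA _⟩ = γ.onA a
    congr 1
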